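/- Let d ≥ 1 and let ρ satisfy conditions (I) and (II). Fix ε ∈ ℂ with ε^d = −1 and define the pairing ⟨f,g⟩ = ∫_ℂ f(z)·conj(σg(z))·ρ(z) dx dy, where σg(z) = Σ_{ℓ=0}^{d−1} (−ε)^{−ℓ}·g_ℓ(ε·z). Then the pairing is invariant under the action of d-th roots of unity: for every ζ ∈ ℂ with ζ^d = 1 and all complex polynomials f, g, one has ⟨f(ζ·z), g(ζ·z)⟩ = ⟨f,g⟩. -/

import Mathlib

open MeasureTheory Polynomial Complex

/-- The weight-`ℓ` component (mod `d`) of a polynomial: the sum of its monomials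
whose degree is congruent to `ℓ` mod `d`. -/
noncomputable def weightComp (d ℓ : ℕ) (f : Polynomial ℂ) : Polynomial ℂ :=
  ∑ k ∈ f.support.filter (fun k => k % d = ℓ), Polynomial.monomial k (f.coeff k)

/-- A polynomial has weight `ℓ` (mod `d`) if all its monomials have degree `≡ ℓ [MOD d]`. -/
def HasWeight (d ℓ : ℕ) (f : Polynomial ℂ) : Prop :=
  ∀ k ∈ f.support, k % d = ℓ

/-- `σg(z) = Σ_{ℓ=0}^{d-1} (-ε)^{-ℓ} g_ℓ(ε z)`. -/
noncomputable def sigmaMap (d : ℕ) (ε : ℂ) (g : Polynomial ℂ) (z : ℂ) : ℂ :=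
  ∑ ℓ ∈ Finset.range d, (-ε) ^ (-(ℓ : ℤ)) * (weightComp d ℓ g).eval (ε * z)

/-- The pairing `⟨f,g⟩ = ∫_ℂ f(z) conj(σg(z)) ρ(z) dx dy`. -/
noncomputable def genPairing (d : ℕ) (ε : ℂ) (ρ : ℂ → ℂ) (f g : Polynomial ℂ) : ℂ :=
  ∫ z : ℂ, f.eval z * (starRingEnd ℂ) (sigmaMap d ε g z) * ρ z

/-- Condition (I): `ρ` is measurable and `∫_ℂ |z|^n |ρ(z)| dx dy < ∞` for all `n`. -/
def CondI (ρ : ℂ → ℂ) : Prop :=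
  Measurable ρ ∧
  ∀ n : ℕ, MeasureTheory.Integrable (fun z : ℂ => ‖z‖ ^ n * ‖ρ z‖)

/-- Condition (II): `ρ(ε z) = conj(ρ(z))` for every `ε` with `ε^d = -1`. -/
def CondII (d : ℕ) (ρ : ℂ → ℂ) : Prop :=
  ∀ ε : ℂ, ε ^ d = -1 → ∀ z : ℂ, ρ (ε * z) = (starRingEnd ℂ) (ρ z)

lemma coeff_comp_C_mul_X (ζ : ℂ) (f : Polynomial ℂ) (k : ℕ) :
    (f.comp (C ζ * X)).coeff k = ζ ^ k * f.coeff k := by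
  induction f using Polynomial.induction_on' with
  | add p q hp hq => simp [add_comp, hp, hq, mul_add]
  | monomial n a =>
    rw [monomial_comp]
    rw [show (C a * (C ζ * X) ^ n) = C (a * ζ ^ n) * X ^ n by
      rw [mul_pow, ← C_pow, map_mul]; ring]
    rw [coeff_C_mul, coeff_X_pow, coeff_monomial]
    by_cases h : n = k
    · subst h; simp [mul_comm]
    · simp [h]; intro hh; exact absurd hh.symm h

lemma weightComp_coeff (d ℓ : ℕ) (g : Polynomial ℂ) (k : ℕ) :
    (weightComp d ℓ g).coeff k = if k % d = ℓ then g.coeff k else 0 := by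
  classical
  rw [weightComp, finset_sum_coeff]
  simp only [coeff_monomial]
  rw [Finset.sum_ite_eq' _ k (fun j => g.coeff j)]
  by_cases h : k % d = ℓ <;>
    by_cases hc : g.coeff k = 0 <;>
    simp [h, hc, Finset.mem_filter, Polynomial.mem_support_iff]

lemma weightComp_comp (d ℓ : ℕ) (ζ : ℂ) (g : Polynomial ℂ) :
    weightComp d ℓ (g.comp (C ζ * X)) = (weightComp d ℓ g).comp (C ζ * X) := by
  ext k
  rw [weightComp_coeff, coeff_comp_C_mul_X, coeff_comp_C_mul_X, weightComp_coeff]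
  split_ifs <;> simp

lemma sigmaMap_comp (d : ℕ) (ε ζ : ℂ) (g : Polynomial ℂ) (z : ℂ) :
    sigmaMap d ε (g.comp (C ζ * X)) z = sigmaMap d ε g (ζ * z) := by
  unfold sigmaMap
  refine Finset.sum_congr rfl fun ℓ _ => ?_
  rw [weightComp_comp, eval_comp]
  simp only [eval_mul, eval_C, eval_X]
  ring_nf

theorem stmt_10 (d : ℕ) (hd : 1 ≤ d) (ρ : ℂ → ℂ) (hI : CondI ρ) (hII : CondII d ρ)
    (ε : ℂ) (hε : ε ^ d = -1) :
    ∀ ζ : ℂ, ζ ^ d = 1 → ∀ f g : Polynomial ℂ,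
      genPairing d ε ρ (f.comp (C ζ * X)) (g.comp (C ζ * X)) = genPairing d ε ρ f g := by
  intro ζ hζ f g
  -- ρ is invariant under multiplication by ζ
  have hρζ : ∀ z : ℂ, ρ (ζ * z) = ρ z := by
    intro z
    have h1 : (ε * ζ) ^ d = -1 := by rw [mul_pow, hε, hζ, mul_one]
    have h2 := hII (ε * ζ) h1 z
    have h3 := hII ε hε (ζ * z)
    rw [show ε * ζ * z = ε * (ζ * z) by ring] at h2
    have : (starRingEnd ℂ) (ρ (ζ * z)) = (starRingEnd ℂ) (ρ z) := by
      rw [← h3, h2]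
    exact (starRingEnd ℂ).injective this
  -- |ζ| = 1
  have habs : ‖ζ‖ = 1 := by
    have h1 : ‖ζ‖ ^ d = 1 ^ d := by rw [← norm_pow, hζ, norm_one, one_pow]
    exact (pow_left_strictMonoOn₀ (Nat.one_le_iff_ne_zero.mp hd)).injOn (norm_nonneg ζ) (by norm_num) h1
  -- rewrite the integrand
  have key : ∀ z : ℂ,
      (f.comp (C ζ * X)).eval z * (starRingEnd ℂ) (sigmaMap d ε (g.comp (C ζ * X)) z) * ρ z
      = f.eval (ζ * z) * (starRingEnd ℂ) (sigmaMap d ε g (ζ * z)) * ρ (ζ * z) := by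
    intro z
    rw [sigmaMap_comp, eval_comp, hρζ z]
    simp
  unfold genPairing
  simp only [key]
  -- change of variables via the rotation isometry
  set T : ℂ ≃ₗᵢ[ℝ] ℂ :=
    rotation ⟨ζ, mem_sphere_zero_iff_norm.2 (by rw [habs])⟩ with hT
  have hTz : ∀ z : ℂ, T z = ζ * z := fun z => rotation_apply _ z
  have := MeasureTheory.integral_comp T
    (fun w : ℂ => f.eval w * (starRingEnd ℂ) (sigmaMap d ε g w) * ρ w)
  simp only [hTz] at this
  exact this
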